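/- Let R be a commutative Noetherian ring, and let G be an object of D^b(mod R) such that for every prime p the localization G_p finitely builds (lies in the thick subcategory generated by) the residue-field Koszul object; if moreover G is a classical generator of D^b(mod R) and M is any finitely generated R-module, then M ⊗^L_R K(p) ∈ ⟨G_p⟩ in D^b(mod R_p) for every prime p. -/

import Mathlib

open CategoryTheory Limits Pretriangulated

universe v u

variable (C : Type u) [Category.{v} C] [HasZeroObject C] [HasShift C ℤ]
  [Preadditive C] [∀ n : ℤ, (shiftFunctor C n).Additive] [Pretriangulated C]
  [HasBinaryBiproducts C]

/-- `X` is a retract of `Y`. -/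
def IsRetractOf {C : Type u} [Category.{v} C] (X Y : C) : Prop :=
  ∃ (i : X ⟶ Y) (r : Y ⟶ X), i ≫ r = 𝟙 X

/-- `add S`: the smallest class containing `S` closed under shifts, finite
coproducts and retracts (in particular isomorphisms and zero objects). -/
inductive AddClosure (S : Set C) : Set C
  | of {X : C} : X ∈ S → AddClosure S X
  | zero {X : C} : IsZero X → AddClosure S X
  | shift {X : C} (n : ℤ) : AddClosure S X → AddClosure S (X⟦n⟧)
  | sum {X Y : C} : AddClosure S X → AddClosure S Y → AddClosure S (X ⊞ Y)
  | retract {X Y : C} : AddClosure S Y → IsRetractOf X Y → AddClosure S X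

/-- The Bondal–Van den Bergh filtration `⟨S⟩ₙ`. -/
def Lvl (S : Set C) : ℕ → Set C
  | 0 => {X : C | IsZero X}
  | 1 => AddClosure C S
  | (n + 2) => AddClosure C
      {E : C | ∃ (A B : C) (f : A ⟶ B) (g : B ⟶ E) (h : E ⟶ A⟦(1 : ℤ)⟧),
        A ∈ Lvl S (n + 1) ∧ B ∈ AddClosure C S ∧
        Triangle.mk f g h ∈ distTriang C}

/-- The smallest thick subcategory `⟨S⟩` containing `S`. -/
inductive ThickClosure (S : Set C) : Set C
  | of {X : C} : X ∈ S → ThickClosure S X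
  | zero {X : C} : IsZero X → ThickClosure S X
  | shift {X : C} (n : ℤ) : ThickClosure S X → ThickClosure S (X⟦n⟧)
  | ext {A E B : C} (f : A ⟶ E) (g : E ⟶ B) (h : B ⟶ A⟦(1 : ℤ)⟧) :
      (Triangle.mk f g h ∈ distTriang C) →
      ThickClosure S A → ThickClosure S B → ThickClosure S E
  | retract {X Y : C} : ThickClosure S Y → IsRetractOf X Y → ThickClosure S X

/-- The star product `S₁ ⋆ S₂` of two classes of objects. -/
def StarProd (S₁ S₂ : Set C) : Set C :=
  {E : C | ∃ (A B : C) (f : A ⟶ E) (g : E ⟶ B) (h : B ⟶ A⟦(1 : ℤ)⟧),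
    A ∈ S₁ ∧ B ∈ S₂ ∧ Triangle.mk f g h ∈ distTriang C}


noncomputable instance (S : Type) [CommRing S] : HasDerivedCategory (ModuleCat.{0} S) :=
  HasDerivedCategory.standard _

/-- A bounded complex of finitely generated modules: a model for an object of
`D^b(mod R)`. -/
def IsBddFg (R : Type) [CommRing R] (E : CochainComplex (ModuleCat R) ℤ) : Prop :=
  (∃ a b : ℤ, ∀ n : ℤ, (n < a ∨ b < n) → IsZero (E.X n)) ∧
  ∀ n : ℤ, Module.Finite R (E.X n)

/-- The iterated-mapping-cone model for `E ⊗^L K(x₁, …, x_c)`: tensoring with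
the Koszul complex on `x₁, …, x_c` is, up to isomorphism in the derived
category, the `c`-fold iterated mapping cone of multiplication by the `xᵢ`.
In particular `koszulTensor R c x` applied to `R` (in degree `0`) is the Koszul
complex `K(x₁, …, x_c)` itself. -/
noncomputable def koszulTensor (R : Type) [CommRing R] :
    (c : ℕ) → (Fin c → R) → CochainComplex (ModuleCat R) ℤ →
      CochainComplex (ModuleCat R) ℤ
  | 0, _, E => E
  | (c + 1), x, E =>
      CochainComplex.mappingCone
        ((x (Fin.last c)) • 𝟙 (koszulTensor R c (fun i => x i.castSucc) E))

/-- `x₁, …, x_c` is a minimal generating set of the maximal ideal of the local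
ring `A`. -/
def MinGens (A : Type) [CommRing A] [IsLocalRing A] (c : ℕ) (x : Fin c → A) : Prop :=
  Ideal.span (Set.range x) = IsLocalRing.maximalIdeal A ∧
  ∀ s : Set A, s ⊆ Set.range x → Ideal.span s = IsLocalRing.maximalIdeal A →
    s = Set.range x

instance extendScalarsAdditive (R S : Type) [CommRing R] [CommRing S] (f : R →+* S) :
    (ModuleCat.extendScalars f).Additive where
  map_add {M N g h} := by
    letI : Algebra R S := ((algebraMap S S).comp f).toAlgebra
    apply ModuleCat.hom_ext
    exact LinearMap.baseChange_add _ _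

/-- The localization `G_p` of a complex `G` over `R` at a prime `p`, as an
object of the derived category of `R_p`-modules. -/
noncomputable def localizeAt (R : Type) [CommRing R] (p : PrimeSpectrum R)
    (G : CochainComplex (ModuleCat R) ℤ) :
    DerivedCategory (ModuleCat (Localization.AtPrime p.asIdeal)) :=
  DerivedCategory.Q.obj
    (((ModuleCat.extendScalars
        (algebraMap R (Localization.AtPrime p.asIdeal))).mapHomologicalComplex
      (ComplexShape.up ℤ)).obj G)

section Aux

section Triangulated

variable {D : Type*} [Category D] [HasZeroObject D] [HasShift D ℤ]
  [Preadditive D] [∀ n : ℤ, (shiftFunctor D n).Additive] [Pretriangulated D]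
  {D' : Type*} [Category D'] [HasZeroObject D'] [HasShift D' ℤ]
  [Preadditive D'] [∀ n : ℤ, (shiftFunctor D' n).Additive] [Pretriangulated D']

lemma thick_of_iso {S : Set D} {X Y : D} (e : X ≅ Y) (h : Y ∈ ThickClosure D S) :
    X ∈ ThickClosure D S :=
  ThickClosure.retract h ⟨e.hom, e.inv, e.hom_inv_id⟩

lemma thick_trans {S T : Set D} (h : ∀ A ∈ S, A ∈ ThickClosure D T) {X : D}
    (hX : X ∈ ThickClosure D S) : X ∈ ThickClosure D T := by
  induction hX with
  | of hA => exact h _ hA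
  | zero hZ => exact ThickClosure.zero hZ
  | shift n _ ih => exact ThickClosure.shift n ih
  | ext f g m hdist _ _ ihA ihB => exact ThickClosure.ext f g m hdist ihA ihB
  | retract _ hr ih => exact ThickClosure.retract ih hr

lemma thick_map (F : D ⥤ D') [F.CommShift ℤ] [F.IsTriangulated]
    {S : Set D} {X : D} (hX : X ∈ ThickClosure D S) :
    F.obj X ∈ ThickClosure D' (F.obj '' S) := by
  induction hX with
  | of hA => exact ThickClosure.of ⟨_, hA, rfl⟩
  | zero hZ => exact ThickClosure.zero (F.map_isZero hZ)
  | shift n _ ih =>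
      exact thick_of_iso ((F.commShiftIso n).app _) (ThickClosure.shift n ih)
  | ext f g m hdist _ _ ihA ihB =>
      exact ThickClosure.ext (F.map f) (F.map g)
        (F.map m ≫ (F.commShiftIso (1 : ℤ)).hom.app _)
        (F.map_distinguished _ hdist) ihA ihB
  | retract _ hr ih =>
      obtain ⟨i, r, hir⟩ := hr
      exact ThickClosure.retract ih ⟨F.map i, F.map r, by
        rw [← F.map_comp, hir, F.map_id]⟩

end Triangulated

section Cone

variable (A : Type) [CommRing A]

lemma cone_mem (S : Set (DerivedCategory (ModuleCat A)))
    {X Y : CochainComplex (ModuleCat A) ℤ} (f : X ⟶ Y)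
    (hX : DerivedCategory.Q.obj X ∈ ThickClosure _ S)
    (hY : DerivedCategory.Q.obj Y ∈ ThickClosure _ S) :
    DerivedCategory.Q.obj (CochainComplex.mappingCone f) ∈ ThickClosure _ S := by
  have hdist : DerivedCategory.Q.mapTriangle.obj (CochainComplex.mappingCone.triangle f) ∈
      distTriang (DerivedCategory (ModuleCat A)) :=
    (DerivedCategory.mem_distTriang_iff _).2 ⟨X, Y, f, ⟨Iso.refl _⟩⟩
  have hrot := rot_of_distTriang _ hdist
  exact ThickClosure.ext _ _ _ hrot hY (ThickClosure.shift 1 hX)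

lemma koszul_mem (S : Set (DerivedCategory (ModuleCat A))) :
    ∀ (c : ℕ) (x : Fin c → A) (E : CochainComplex (ModuleCat A) ℤ),
      DerivedCategory.Q.obj E ∈ ThickClosure _ S →
      DerivedCategory.Q.obj (koszulTensor A c x E) ∈ ThickClosure _ S
  | 0, _, _, hE => hE
  | (c + 1), x, E, hE =>
      cone_mem A S _ (koszul_mem S c _ E hE) (koszul_mem S c _ E hE)

end Cone

section Single

lemma isBddFg_single (R : Type) [CommRing R] (M : ModuleCat R) [Module.Finite R M] :
    IsBddFg R ((HomologicalComplex.single (ModuleCat R) (ComplexShape.up ℤ) 0).obj M) := by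
  constructor
  · exact ⟨0, 0, fun n hn =>
      HomologicalComplex.isZero_single_obj_X _ _ _ _ (by omega)⟩
  · intro n
    by_cases h : n = 0
    · subst h
      exact Module.Finite.equiv
        (HomologicalComplex.singleObjXSelf (ComplexShape.up ℤ) 0 M).toLinearEquiv.symm
    · have hz := HomologicalComplex.isZero_single_obj_X
        (ComplexShape.up ℤ) 0 M n h
      have e := hz.iso (ModuleCat.isZero_of_subsingleton (ModuleCat.of R PUnit))
      exact Module.Finite.equiv e.symm.toLinearEquiv

end Single

section Exactness

variable (R : Type) [CommRing R] (p : PrimeSpectrum R)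

lemma extendScalars_shortComplex_exact
    (C : ShortComplex (ModuleCat R)) (hC : C.Exact) :
    (C.map (ModuleCat.extendScalars
      (algebraMap R (Localization.AtPrime p.asIdeal)))).Exact := by
  set S := Localization.AtPrime p.asIdeal
  set f := algebraMap R S
  set Ms : ModuleCat R := (ModuleCat.restrictScalars f).obj (ModuleCat.of S S) with hMs
  have e : (Ms : Type) ≃ₗ[R] S :=
    { toFun := id, invFun := id,
      map_add' := fun _ _ => rfl,
      map_smul' := fun r x => (Algebra.smul_def (A := S) r x).symm,
      left_inv := fun _ => rfl, right_inv := fun _ => rfl }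
  have : Module.Flat R S := IsLocalization.flat S p.asIdeal.primeCompl
  have hflat : Module.Flat R Ms := Module.Flat.of_linearEquiv e
  rw [ShortComplex.ShortExact.moduleCat_exact_iff_function_exact] at hC ⊢
  have key : ∀ {M1 M2 : ModuleCat R} (l : M1 ⟶ M2),
      ⇑((ModuleCat.extendScalars f).map l) = ⇑(LinearMap.lTensor (Ms : Type) l.hom) := by
    intro M1 M2 l
    funext t
    induction t using TensorProduct.induction_on with
    | zero => exact (map_zero ((ModuleCat.extendScalars f).map l).hom).trans (map_zero (LinearMap.lTensor (Ms : Type) l.hom)).symm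
    | tmul s m => rfl
    | add a b iha ihb => exact ((map_add ((ModuleCat.extendScalars f).map l).hom a b).trans (congrArg₂ (· + ·) iha ihb)).trans (map_add (LinearMap.lTensor (Ms : Type) l.hom) a b).symm
  have := Module.Flat.lTensor_exact (Ms : Type) (f := C.f.hom) (g := C.g.hom) hC
  rw [show ⇑(C.map (ModuleCat.extendScalars f)).f = ⇑(LinearMap.lTensor (Ms : Type) C.f.hom) from key C.f,
    show ⇑(C.map (ModuleCat.extendScalars f)).g = ⇑(LinearMap.lTensor (Ms : Type) C.g.hom) from key C.g]
  exact this

end Exactness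

end Aux

/-- If `G ∈ D^b(mod R)` is such that for every prime `p` the localization `G_p`
finitely builds the residue-field Koszul object `K(p)` (the Koszul complex on a
minimal generating set of the maximal ideal of `R_p`), and `G` is a classical
generator of `D^b(mod R)`, then for every finitely generated `R`-module `M` and
every prime `p`, `M ⊗^L K(p)` (realized as the iterated mapping cone
`koszulTensor _ c x` applied to `M_p`) lies in `⟨G_p⟩`. -/
theorem stmt_19 (R : Type) [CommRing R] [IsNoetherianRing R]
    (G : CochainComplex (ModuleCat R) ℤ) (hGbdd : IsBddFg R G)
    (hKoszul : ∀ (p : PrimeSpectrum R) (c : ℕ)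
      (x : Fin c → Localization.AtPrime p.asIdeal),
      MinGens _ c x →
      DerivedCategory.Q.obj
          (koszulTensor _ c x
            ((HomologicalComplex.single (ModuleCat (Localization.AtPrime p.asIdeal))
                (ComplexShape.up ℤ) 0).obj
              (ModuleCat.of _ (Localization.AtPrime p.asIdeal)))) ∈
        ThickClosure (DerivedCategory (ModuleCat (Localization.AtPrime p.asIdeal)))
          {localizeAt R p G})
    (hgen : ∀ E : CochainComplex (ModuleCat R) ℤ, IsBddFg R E →
      DerivedCategory.Q.obj E ∈
        ThickClosure (DerivedCategory (ModuleCat R)) {DerivedCategory.Q.obj G})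
    (M : Type) [AddCommGroup M] [Module R M] [Module.Finite R M] :
    ∀ (p : PrimeSpectrum R) (c : ℕ) (x : Fin c → Localization.AtPrime p.asIdeal),
      MinGens _ c x →
      DerivedCategory.Q.obj
          (koszulTensor _ c x
            ((HomologicalComplex.single (ModuleCat (Localization.AtPrime p.asIdeal))
                (ComplexShape.up ℤ) 0).obj
              ((ModuleCat.extendScalars
                  (algebraMap R (Localization.AtPrime p.asIdeal))).obj
                (ModuleCat.of R M)))) ∈
        ThickClosure (DerivedCategory (ModuleCat (Localization.AtPrime p.asIdeal)))
          {localizeAt R p G} := by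
  intro p c x _hx
  set S := Localization.AtPrime p.asIdeal with hS
  set f := algebraMap R S with hf
  set F := ModuleCat.extendScalars f with hF
  have hPL : PreservesFiniteLimits F ∧ PreservesFiniteColimits F :=
    ((Functor.exact_tfae F).out 1 3).1
      (fun C hC => extendScalars_shortComplex_exact R p C hC)
  letI := hPL.1
  letI := hPL.2
  apply koszul_mem
  -- goal : Q.obj (single.obj (F.obj (of R M))) ∈ ⟨localizeAt R p G⟩
  have h1 := hgen _ (@isBddFg_single R _ (ModuleCat.of R M) (inferInstanceAs (Module.Finite R M)))
  have h2 := thick_map F.mapDerivedCategory h1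
  have h3 : ∀ A ∈ (F.mapDerivedCategory.obj '' {DerivedCategory.Q.obj G}),
      A ∈ ThickClosure (DerivedCategory (ModuleCat S)) {localizeAt R p G} := by
    rintro _ ⟨A, hA, rfl⟩
    rw [Set.mem_singleton_iff] at hA
    subst hA
    exact thick_of_iso (F.mapDerivedCategoryFactors.app G)
      (ThickClosure.of rfl)
  have h4 := thick_trans h3 h2
  have e₁ : DerivedCategory.Q.obj
        ((HomologicalComplex.single (ModuleCat S) (ComplexShape.up ℤ) 0).obj
          (F.obj (ModuleCat.of R M))) ≅
      DerivedCategory.Q.obj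
        ((F.mapHomologicalComplex (ComplexShape.up ℤ)).obj
          ((HomologicalComplex.single (ModuleCat R) (ComplexShape.up ℤ) 0).obj
            (ModuleCat.of R M))) :=
    DerivedCategory.Q.mapIso
      (((HomologicalComplex.singleMapHomologicalComplex F (ComplexShape.up ℤ) 0).app
        (ModuleCat.of R M)).symm)
  have e₂ :
      DerivedCategory.Q.obj
        ((F.mapHomologicalComplex (ComplexShape.up ℤ)).obj
          ((HomologicalComplex.single (ModuleCat R) (ComplexShape.up ℤ) 0).obj
            (ModuleCat.of R M))) ≅
      F.mapDerivedCategory.obj (DerivedCategory.Q.obj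
        ((HomologicalComplex.single (ModuleCat R) (ComplexShape.up ℤ) 0).obj
          (ModuleCat.of R M))) :=
    (F.mapDerivedCategoryFactors.app _).symm
  exact thick_of_iso (e₁ ≪≫ e₂) h4
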